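/- Let R be a strict partial order (irreflexive and transitive relation) on a set A, and suppose that every strict linear extension of R is a well ordering of A (every strict total order L on A with R ⊆ L is well-founded). Then R is well-founded and A has no infinite totally unordered subset under R. -/

import Mathlib

lemma exists_strict_linear_ext {A : Type*} (R : A → A → Prop) (hirr : ∀ x : A, ¬ R x x)
    (htrans : Transitive R) :
    ∃ L : A → A → Prop, (∀ x y, R x y → L x y) ∧ (∀ x, ¬ L x x) ∧ Transitive L ∧
      (∀ x y, L x y ∨ x = y ∨ L y x) := by
  classical
  let r : A → A → Prop := fun x y => R x y ∨ x = y
  haveI : IsRefl A r := ⟨fun x => Or.inr rfl⟩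
  haveI : IsTrans A r := ⟨by
    rintro a b c (h | rfl) (h' | rfl)
    · exact Or.inl (htrans h h')
    · exact Or.inl h
    · exact Or.inl h'
    · exact Or.inr rfl⟩
  haveI : IsAntisymm A r := ⟨by
    rintro a b (h | rfl) (h' | h')
    · exact absurd (htrans h h') (hirr a)
    · exact h'.symm
    · rfl
    · rfl⟩
  haveI : IsPreorder A r := ⟨⟩
  haveI : IsPartialOrder A r := ⟨⟩
  obtain ⟨s, hlin, hrs⟩ := extend_partialOrder r
  haveI := hlin
  refine ⟨fun x y => s x y ∧ x ≠ y, ?_, ?_, ?_, ?_⟩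
  · intro x y h
    refine ⟨hrs x y (Or.inl h), ?_⟩
    rintro rfl; exact hirr x h
  · rintro x ⟨-, hne⟩; exact hne rfl
  · rintro a b c ⟨hab, hab'⟩ ⟨hbc, hbc'⟩
    refine ⟨Trans.trans hab hbc, ?_⟩
    rintro rfl
    exact hab' (antisymm hab hbc)
  · intro x y
    rcases eq_or_ne x y with rfl | hne
    · exact Or.inr (Or.inl rfl)
    · rcases total_of s x y with h | h
      · exact Or.inl ⟨h, hne⟩
      · exact Or.inr (Or.inr ⟨h, hne.symm⟩)

/-- If every strict linear extension of a strict partial order `R` on `A` is well-founded,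
then `R` is well-founded and `A` has no infinite totally unordered subset under `R`. -/
theorem pwo_no_infinite_antichain_of_every_linear_extension_well_ordered
    {A : Type*} (R : A → A → Prop) (hirr : ∀ x : A, ¬ R x x) (htrans : Transitive R)
    (hext : ∀ L : A → A → Prop, (∀ x y : A, R x y → L x y) →
      (∀ x : A, ¬ L x x) → Transitive L → (∀ x y : A, L x y ∨ x = y ∨ L y x) →
      WellFounded L) :
    WellFounded R ∧
      ¬ ∃ B : Set A, B.Infinite ∧ ∀ x ∈ B, ∀ y ∈ B, x ≠ y → ¬ R x y ∧ ¬ R y x := by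
  classical
  constructor
  · obtain ⟨L, h1, h2, h3, h4⟩ := exists_strict_linear_ext R hirr htrans
    exact Subrelation.wf (fun {a b} h => h1 a b h) (hext L h1 h2 h3 h4)
  · rintro ⟨B, hBinf, hanti⟩
    let f := hBinf.natEmbedding
    let g : ℕ → A := fun n => (f n : A)
    have hg : Function.Injective g := fun m n h => f.injective (Subtype.ext h)
    have hgB : ∀ n, g n ∈ B := fun n => (f n).2
    have noR : ∀ m n, ¬ R (g m) (g n) := by
      intro m n h
      rcases eq_or_ne m n with rfl | hne
      · exact hirr _ h
      · exact (hanti _ (hgB m) _ (hgB n) (fun e => hne (hg e))).1 h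
    -- R' extends R by making g (n+1) less than g n
    let R' : A → A → Prop := fun x y =>
      R x y ∨ ∃ m n, n < m ∧ (x = g m ∨ R x (g m)) ∧ (g n = y ∨ R (g n) y)
    have key : ∀ m n x, (g n = x ∨ R (g n) x) → (x = g m ∨ R x (g m)) → n = m := by
      rintro m n x (rfl | h1) (h2 | h2)
      · exact hg h2
      · exact absurd h2 (noR n m)
      · exact absurd (h2 ▸ h1) (noR n m)
      · exact absurd (htrans h1 h2) (noR n m)
    have hirr' : ∀ x, ¬ R' x x := by
      rintro x (h | ⟨m, n, hnm, hx, hy⟩)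
      · exact hirr x h
      · exact absurd (key m n x hy hx) hnm.ne
    have htrans' : Transitive R' := by
      rintro x y z (h | ⟨m, n, hnm, hx, hy⟩) (h' | ⟨m', n', hn'm', hy', hz⟩)
      · exact Or.inl (htrans h h')
      · refine Or.inr ⟨m', n', hn'm', ?_, hz⟩
        rcases hy' with rfl | h2
        · exact Or.inr h
        · exact Or.inr (htrans h h2)
      · refine Or.inr ⟨m, n, hnm, hx, ?_⟩
        rcases hy with rfl | h2
        · exact Or.inr h'
        · exact Or.inr (htrans h2 h')
      · have hnm' : n = m' := key m' n y hy hy'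
        exact Or.inr ⟨m, n', hn'm'.trans (hnm' ▸ hnm), hx, hz⟩
    obtain ⟨L, hL1, hL2, hL3, hL4⟩ := exists_strict_linear_ext R' hirr' htrans'
    have hwf := hext L (fun x y h => hL1 x y (Or.inl h)) hL2 hL3 hL4
    have hdesc : ∀ n, L (g (n + 1)) (g n) := fun n =>
      hL1 _ _ (Or.inr ⟨n + 1, n, Nat.lt_succ_self n, Or.inl rfl, Or.inl rfl⟩)
    have hne : (Set.range g).Nonempty := ⟨g 0, 0, rfl⟩
    obtain ⟨k, hk⟩ := hwf.min_mem (Set.range g) hne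
    exact hwf.not_lt_min (Set.range g) ⟨k + 1, rfl⟩ (hk ▸ hdesc k)
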